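/- arXiv:2105.10667 — 2 statements merged into one kernel-verified Lean document; each statement's English description precedes it below -/
import Mathlib

section
/- (Asymptotic momentum bound for the damped mechanical equation) Let V : ℝ × ℝ → ℝ be C¹ and 1-periodic in each variable, let x : [0,∞) → ℝ be continuous, and let p : [0,∞) → ℝ be differentiable with p'(t) = −∂_x V(x(t),t) − f(t) p(t) for all t ≥ 0. Then limsup_{t→+∞} |p(t)| ≤ (e^{2k₀+[f]}/[f]) · sup_{(x,t)} |∂_x V(x,t)|. -/
open MeasureTheory Real Filter

noncomputable section

/-- Asymptotic momentum bound for the damped mechanical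
equation `p' = -∂ₓV(x,t) - f(t) p`:
`limsup_{t→+∞} |p(t)| ≤ (e^{2k₀+[f]}/[f]) · sup |∂ₓV|`. -/
theorem asymptotic_momentum_bound
    (f F : ℝ → ℝ) (m k₀ : ℝ)
    (hf : Continuous f) (hfper : ∀ t, f (t + 1) = f t)
    (hm : m = ∫ t in (0:ℝ)..1, f t) (hmpos : 0 < m)
    (hF : ∀ t, F t = ∫ τ in (0:ℝ)..t, f τ)
    (hk₀ : IsGreatest ((fun s => |F s|) '' Set.Icc (0:ℝ) 2) k₀)
    (V : ℝ → ℝ → ℝ)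
    (hV : ContDiff ℝ 1 (fun q : ℝ × ℝ => V q.1 q.2))
    (hVx : ∀ y t, V (y + 1) t = V y t)
    (hVt : ∀ y t, V y (t + 1) = V y t)
    (x p : ℝ → ℝ)
    (hx : ContinuousOn x (Set.Ici 0))
    (hp : ∀ t ∈ Set.Ici (0:ℝ), HasDerivWithinAt p
      (-(deriv (fun y => V y t) (x t)) - f t * p t) (Set.Ici 0) t) :
    Filter.limsup (fun t => |p t|) Filter.atTop ≤
      Real.exp (2 * k₀ + m) / m *
        sSup { y | ∃ a b : ℝ, y = |deriv (fun y' => V y' b) a| } := by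
  set W : ℝ × ℝ → ℝ := fun q => V q.1 q.2 with hWdef
  set h : ℝ × ℝ → ℝ := fun q => deriv (fun y => V y q.2) q.1 with hhdef
  -- the partial derivative as evaluation of the full Fréchet derivative
  have hderivV : ∀ a b : ℝ, HasDerivAt (fun y => V y b) (fderiv ℝ W (a, b) (1, 0)) a := by
    intro a b
    have h1 : HasDerivAt (fun y : ℝ => (y, b)) ((1 : ℝ), (0 : ℝ)) a :=
      (hasDerivAt_id a).prodMk (hasDerivAt_const a b)
    exact ((hV.differentiable one_ne_zero) (a, b)).hasFDerivAt.comp_hasDerivAt a h1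
  have hh_eq : h = fun q : ℝ × ℝ => fderiv ℝ W q (1, 0) :=
    funext fun q => (hderivV q.1 q.2).deriv
  have hhcont : Continuous h := by
    rw [hh_eq]
    exact (hV.continuous_fderiv one_ne_zero).clm_apply continuous_const
  -- periodicity of h in each variable
  have hper1 : ∀ b, Function.Periodic (fun a => h (a, b)) 1 := by
    intro b a
    have hpv : Function.Periodic (fun y => V y b) 1 := fun y => hVx y b
    simp only [hhdef]
    have e1 : HasDerivAt (fun y => V y b) (fderiv ℝ W (a + 1, b) (1, 0)) a := by
      have := hderivV (a + 1) b
      have comp : HasDerivAt (fun y => V (y + 1) b) (fderiv ℝ W (a + 1, b) (1, 0)) a := by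
        simpa [Function.comp_def] using this.comp a ((hasDerivAt_id a).add_const 1)
      have : (fun y => V (y + 1) b) = fun y => V y b := funext fun y => hVx y b
      rwa [this] at comp
    rw [e1.deriv, (hderivV (a + 1) b).deriv]
  have hper2 : ∀ a b, h (a, b + 1) = h (a, b) := by
    intro a b
    have : (fun y => V y (b + 1)) = fun y => V y b := funext fun y => hVt y b
    simp only [hhdef, this]
  have hper2' : ∀ b, Function.Periodic (fun t => h (t, b)) 1 := hper1
  -- boundedness of h
  obtain ⟨q₀, hq₀mem, hq₀⟩ :=
    ((isCompact_Icc (a := (0:ℝ)) (b := 1)).prod (isCompact_Icc (a := (0:ℝ)) (b := 1))).exists_isMaxOn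
      ⟨((0 : ℝ), (0 : ℝ)), by constructor <;> exact ⟨le_rfl, zero_le_one⟩⟩
      (hhcont.abs.continuousOn :
        ContinuousOn (fun q : ℝ × ℝ => |h q|) (Set.Icc (0:ℝ) 1 ×ˢ Set.Icc (0:ℝ) 1))
  have habs : ∀ a b : ℝ, |h (a, b)| ≤ |h q₀| := by
    intro a b
    have e1 : h (a, b) = h (Int.fract a, Int.fract b) := by
      have p2 : Function.Periodic (fun t => h (a, t)) 1 := fun t => hper2 a t
      have s2 : h (a, Int.fract b) = h (a, b) := by
        have := p2.sub_int_mul_eq (x := b) ⌊b⌋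
        rw [mul_one] at this
        exact this
      have s1 : h (Int.fract a, Int.fract b) = h (a, Int.fract b) := by
        have := (hper1 (Int.fract b)).sub_int_mul_eq (x := a) ⌊a⌋
        rw [mul_one] at this
        exact this
      rw [← s2, ← s1]
    rw [e1]
    exact hq₀ ⟨⟨(Int.fract_nonneg a), (Int.fract_lt_one a).le⟩,
       ⟨(Int.fract_nonneg b), (Int.fract_lt_one b).le⟩⟩
  -- the supremum M
  set S : Set ℝ := { y | ∃ a b : ℝ, y = |deriv (fun y' => V y' b) a| } with hSdef
  have hSmem : ∀ a b : ℝ, |h (a, b)| ∈ S := fun a b => ⟨a, b, rfl⟩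
  have hSbdd : BddAbove S := by
    refine ⟨|h q₀|, fun y hy => ?_⟩
    obtain ⟨a, b, rfl⟩ := hy
    exact habs a b
  set M : ℝ := sSup S with hMdef
  have hMle : ∀ a b : ℝ, |h (a, b)| ≤ M := fun a b => le_csSup hSbdd (hSmem a b)
  have hM0 : 0 ≤ M := le_trans (abs_nonneg _) (hMle 0 0)
  -- facts about F
  have hFfun : F = fun t => ∫ τ in (0:ℝ)..t, f τ := funext hF
  have hFd : ∀ t, HasDerivAt F (f t) t := by
    intro t; rw [hFfun]; exact (hf.integral_hasStrictDerivAt 0 t).hasDerivAt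
  have hF0 : F 0 = 0 := by rw [hF]; simp
  have hfint : ∀ a b : ℝ, IntervalIntegrable f volume a b := fun a b =>
    hf.intervalIntegrable a b
  have hfp : Function.Periodic f 1 := hfper
  have hFstep : ∀ t, F (t + 1) = F t + m := by
    intro t
    have e1 : (∫ τ in t..(t+1), f τ) = ∫ τ in (0:ℝ)..(0+1), f τ := hfp.intervalIntegral_add_eq t 0
    rw [hF, hF, hm]
    rw [← intervalIntegral.integral_add_adjacent_intervals (hfint 0 t) (hfint t (t+1)), e1]
    norm_num
  have hFn : ∀ (n : ℕ) (t : ℝ), F (t + n) = F t + n * m := by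
    intro n
    induction n with
    | zero => simp
    | succ k ih =>
      intro t
      have : (t + (k + 1 : ℕ) : ℝ) = (t + k) + 1 := by push_cast; ring
      rw [this, hFstep, ih]; push_cast; ring
  have hk₀ub : ∀ s ∈ Set.Icc (0:ℝ) 2, |F s| ≤ k₀ := fun s hs =>
    hk₀.2 (Set.mem_image_of_mem _ hs)
  have hFbound : ∀ t : ℝ, 0 ≤ t → m * t - (m + k₀) ≤ F t ∧ F t ≤ m * t + k₀ := by
    intro t ht
    set n : ℕ := ⌊t⌋₊ with hn
    set r : ℝ := t - n with hr
    have hr0 : 0 ≤ r := by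
      have := Nat.floor_le ht; simpa [hr] using this
    have hr1 : r < 1 := by
      have := Nat.lt_floor_add_one t
      simp only [hr]; linarith
    have hFt : F t = F r + n * m := by
      have := hFn n r
      rwa [show r + (n:ℝ) = t by simp [hr]] at this
    have hFr : |F r| ≤ k₀ := hk₀ub r ⟨hr0, by linarith⟩
    have h1 : -k₀ ≤ F r := by cases abs_le.mp hFr; linarith
    have h2 : F r ≤ k₀ := (abs_le.mp hFr).2
    have hnl : (t : ℝ) - 1 < n := by
      have := Nat.lt_floor_add_one t; simp only [hn]; linarith
    have hnu : (n : ℝ) ≤ t := by simpa [hn] using Nat.floor_le ht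
    constructor
    · have : m * (t - 1) ≤ m * n := by
        apply mul_le_mul_of_nonneg_left (le_of_lt hnl) hmpos.le
      rw [hFt]; nlinarith
    · rw [hFt]; nlinarith
  -- setup the auxiliary function q = exp(F) * p
  set g : ℝ → ℝ := fun u => h (x u, u) with hgdef
  have hgM : ∀ u, |g u| ≤ M := fun u => hMle (x u) u
  set q : ℝ → ℝ := fun t => Real.exp (F t) * p t with hqdef
  have hq : ∀ t ∈ Set.Ici (0:ℝ),
      HasDerivWithinAt q (-(Real.exp (F t) * g t)) (Set.Ici 0) t := by
    intro t ht
    have h1 : HasDerivWithinAt (fun u => Real.exp (F u)) (Real.exp (F t) * f t)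
        (Set.Ici 0) t := ((hFd t).exp).hasDerivWithinAt
    have h2 := h1.mul (hp t ht)
    have e : Real.exp (F t) * f t * p t +
        Real.exp (F t) * (-(deriv (fun y => V y t) (x t)) - f t * p t)
        = -(Real.exp (F t) * g t) := by
      simp only [hgdef, hhdef]; ring
    rw [e] at h2
    exact h2
  have hqcont : ContinuousOn q (Set.Ici 0) := fun t ht =>
    (hq t ht).continuousWithinAt
  have hgcont : ContinuousOn g (Set.Ici 0) := by
    apply hhcont.comp_continuousOn
    exact hx.prodMk continuousOn_id
  have hFcont : Continuous F := by
    rw [continuous_iff_continuousAt]; exact fun t => (hFd t).continuousAt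
  -- FTC
  have key : ∀ T : ℝ, 0 ≤ T →
      q T - q 0 = ∫ u in (0:ℝ)..T, -(Real.exp (F u) * g u) := by
    intro T hT
    have hsub : Set.Icc (0:ℝ) T ⊆ Set.Ici 0 := fun v hv => hv.1
    have hint : IntervalIntegrable (fun u => -(Real.exp (F u) * g u)) volume 0 T := by
      apply ContinuousOn.intervalIntegrable
      rw [Set.uIcc_of_le hT]
      exact (((hFcont.rexp).continuousOn.mul (hgcont.mono hsub))).neg
    have hderiv : ∀ u ∈ Set.Ioo (0:ℝ) T,
        HasDerivWithinAt q (-(Real.exp (F u) * g u)) (Set.Ioi u) u := by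
      intro u hu
      exact ((hq u (le_of_lt hu.1)).hasDerivAt (Ici_mem_nhds hu.1)).hasDerivWithinAt
    exact (intervalIntegral.integral_eq_sub_of_hasDeriv_right_of_le hT
      (hqcont.mono hsub) hderiv hint).symm
  -- exponential integral bound
  have hexpint : ∀ T : ℝ, 0 ≤ T →
      (∫ u in (0:ℝ)..T, Real.exp (m * u + k₀) * M)
        ≤ M * (Real.exp k₀ * Real.exp (m * T) / m) := by
    intro T hT
    have hprim : ∀ u : ℝ, HasDerivAt (fun v => Real.exp k₀ * M * (Real.exp (m * v) / m))
        (Real.exp (m * u + k₀) * M) u := by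
      intro u
      have h1 : HasDerivAt (fun v : ℝ => m * v) m u := by
        simpa using (hasDerivAt_id u).const_mul m
      have h2 : HasDerivAt (fun v => Real.exp (m * v)) (Real.exp (m * u) * m) u := h1.exp
      have h3 := (h2.div_const m).const_mul (Real.exp k₀ * M)
      refine h3.congr_deriv ?_
      rw [mul_div_assoc, div_self hmpos.ne', mul_one, Real.exp_add]
      ring
    have e1 : (∫ u in (0:ℝ)..T, Real.exp (m * u + k₀) * M)
        = Real.exp k₀ * M * (Real.exp (m * T) / m)
          - Real.exp k₀ * M * (Real.exp (m * 0) / m) := by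
      apply intervalIntegral.integral_eq_sub_of_hasDerivAt (fun u _ => hprim u)
      apply ContinuousOn.intervalIntegrable
      exact (((continuous_const.mul continuous_id).add continuous_const).rexp.mul
        continuous_const).continuousOn
    rw [e1]
    have hpos : 0 ≤ Real.exp k₀ * M * (Real.exp (m * 0) / m) := by
      positivity
    have e2 : Real.exp k₀ * M * (Real.exp (m * T) / m)
        = M * (Real.exp k₀ * Real.exp (m * T) / m) := by ring
    linarith [hpos]
  -- pointwise bound
  set C : ℝ := Real.exp (2 * k₀ + m) / m * M with hCdef
  have hpt : ∀ T : ℝ, 0 ≤ T →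
      |p T| ≤ Real.exp (m + k₀ - m * T) * |p 0| + C := by
    intro T hT
    have hFb := hFbound T hT
    -- |q T| bound
    have hib : |∫ u in (0:ℝ)..T, -(Real.exp (F u) * g u)|
        ≤ M * (Real.exp k₀ * Real.exp (m * T) / m) := by
      have h1 := intervalIntegral.abs_integral_le_integral_abs
        (f := fun u => -(Real.exp (F u) * g u)) (μ := volume) hT
      refine h1.trans ?_
      have hsub : Set.Icc (0:ℝ) T ⊆ Set.Ici 0 := fun v hv => hv.1
      have h2 : (∫ u in (0:ℝ)..T, |(-(Real.exp (F u) * g u))|)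
          ≤ ∫ u in (0:ℝ)..T, Real.exp (m * u + k₀) * M := by
        apply intervalIntegral.integral_mono_on hT
        · apply ContinuousOn.intervalIntegrable
          rw [Set.uIcc_of_le hT]
          exact ((hFcont.rexp).continuousOn.mul (hgcont.mono hsub)).neg.abs
        · apply ContinuousOn.intervalIntegrable
          exact (((continuous_const.mul continuous_id).add continuous_const).rexp.mul
            continuous_const).continuousOn
        · intro u hu
          have e : |(-(Real.exp (F u) * g u))| = Real.exp (F u) * |g u| := by
            rw [abs_neg, abs_mul, Real.abs_exp]
          rw [e]
          have b1 : Real.exp (F u) ≤ Real.exp (m * u + k₀) :=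
            Real.exp_le_exp.mpr (hFbound u hu.1).2
          have := hgM u
          nlinarith [Real.exp_pos (F u), abs_nonneg (g u)]
      exact h2.trans (hexpint T hT)
    have hqT : |q T| ≤ |p 0| + M * (Real.exp k₀ * Real.exp (m * T) / m) := by
      have := key T hT
      have hq0 : q 0 = p 0 := by simp [hqdef, hF0]
      calc |q T| = |q 0 + (q T - q 0)| := by ring_nf
        _ ≤ |q 0| + |q T - q 0| := abs_add_le _ _
        _ ≤ |p 0| + M * (Real.exp k₀ * Real.exp (m * T) / m) := by
            rw [this, hq0]; exact add_le_add le_rfl hib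
    have hpT : |p T| = Real.exp (-F T) * |q T| := by
      simp only [hqdef, abs_mul, Real.abs_exp]
      rw [← mul_assoc, ← Real.exp_add]
      simp
    have hexpFT : Real.exp (-F T) ≤ Real.exp (m + k₀ - m * T) :=
      Real.exp_le_exp.mpr (by linarith [hFb.1])
    rw [hpT]
    have step : Real.exp (-F T) * |q T|
        ≤ Real.exp (m + k₀ - m * T) * (|p 0| + M * (Real.exp k₀ * Real.exp (m * T) / m)) := by
      apply mul_le_mul hexpFT hqT (abs_nonneg _) (Real.exp_pos _).le
    refine step.trans ?_
    have e3 : Real.exp (m + k₀ - m * T) * (Real.exp k₀ * Real.exp (m * T))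
        = Real.exp (2 * k₀ + m) := by
      rw [← Real.exp_add, ← Real.exp_add]
      congr 1
      ring
    have e2 : Real.exp (m + k₀ - m * T) * (M * (Real.exp k₀ * Real.exp (m * T) / m)) = C := by
      rw [hCdef, ← e3]
      ring
    rw [mul_add, e2]
  -- limsup bound
  have hten : Tendsto (fun T => Real.exp (m + k₀ - m * T) * |p 0| + C) atTop (nhds (0 * |p 0| + C)) := by
    apply Tendsto.add _ tendsto_const_nhds
    apply Tendsto.mul_const
    apply Real.tendsto_exp_atBot.comp
    apply tendsto_atBot_add_const_left
    apply tendsto_neg_atBot_iff.mpr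
    exact Tendsto.const_mul_atTop hmpos tendsto_id
  have hev : ∀ᶠ T in atTop, |p T| ≤ Real.exp (m + k₀ - m * T) * |p 0| + C := by
    filter_upwards [eventually_ge_atTop (0:ℝ)] with T hT using hpt T hT
  have hcb : IsCoboundedUnder (· ≤ ·) atTop (fun t => |p t|) :=
    isCoboundedUnder_le_of_le atTop (x := 0) (fun t => abs_nonneg _)
  have hbd : IsBoundedUnder (· ≤ ·) atTop (fun T => Real.exp (m + k₀ - m * T) * |p 0| + C) :=
    hten.isBoundedUnder_le
  calc Filter.limsup (fun t => |p t|) Filter.atTop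
      ≤ Filter.limsup (fun T => Real.exp (m + k₀ - m * T) * |p 0| + C) atTop :=
        limsup_le_limsup hev hcb hbd
    _ = 0 * |p 0| + C := hten.limsup_eq
    _ = Real.exp (2 * k₀ + m) / m * M := by rw [hCdef]; ring
end
end

section
/- (Monotonicity along the extended Hamiltonian flow) Let α ∈ ℝ and let (x,p,u) : I → ℝⁿ × ℝⁿ × ℝ be C¹ on an interval I and satisfy x'(t) = ∂_p H(x(t),p(t),t), p'(t) = −∂_x H(x(t),p(t),t) − f(t) p(t), and u'(t) = ⟨∂_p H(x(t),p(t),t), p(t)⟩ − H(x(t),p(t),t) + α − f(t) u(t) for all t ∈ I. Then the function t ↦ e^{F(t)} (u_α⁻(x(t),t) − u(t)) is non-increasing on I. In particular, if u(t₀) ≥ u_α⁻(x(t₀),t₀) for some t₀ ∈ I, then u(t) ≥ u_α⁻(x(t),t) for all t ∈ I with t ≥ t₀. -/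
open MeasureTheory Real Filter
open scoped RealInnerProductSpace

noncomputable section
open Topology

/-- `ℝⁿ` with the Euclidean norm. -/
abbrev Evec (n : ℕ) : Type := EuclideanSpace ℝ (Fin n)

/-- The vector of `Evec n` with integer coordinates `k`. -/
def intVec {n : ℕ} (k : Fin n → ℤ) : Evec n := WithLp.toLp 2 (fun i => (k i : ℝ))

/-- `γ` is absolutely continuous on the interval `S` with derivative `γ'`:
on any subinterval of `S` it is the indefinite integral of the locally
integrable function `γ'`. -/
def ACOn {n : ℕ} (γ γ' : ℝ → Evec n) (S : Set ℝ) : Prop :=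
  ∀ a ∈ S, ∀ b ∈ S,
    IntervalIntegrable γ' MeasureTheory.volume a b ∧ γ b = γ a + ∫ τ in a..b, γ' τ

/-- The set of (finite) actions `∫_{-∞}^t e^{F(s)-F(t)} (L + α)` of admissible
absolutely continuous curves `γ : (-∞, t] → ℝⁿ` with `γ t = x`. -/
def wkSet {n : ℕ} (F : ℝ → ℝ) (L : Evec n → Evec n → ℝ → ℝ) (α : ℝ)
    (x : Evec n) (t : ℝ) : Set ℝ :=
  { r | ∃ γ γ' : ℝ → Evec n, ACOn γ γ' (Set.Iic t) ∧ γ t = x ∧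
      MeasureTheory.IntegrableOn
        (fun s => Real.exp (F s - F t) * (L (γ s) (γ' s) s + α)) (Set.Iic t) ∧
      r = ∫ s in Set.Iic t, Real.exp (F s - F t) * (L (γ s) (γ' s) s + α) }

/-- The weak KAM solution `u_α⁻(x,t)`. -/
def uWK {n : ℕ} (F : ℝ → ℝ) (L : Evec n → Evec n → ℝ → ℝ) (α : ℝ)
    (x : Evec n) (t : ℝ) : ℝ :=
  sInf (wkSet F L α x t)

/-- The conjugate Tonelli Hamiltonian `H(x,p,t) = sup_v (⟨p,v⟩ - L(x,v,t))`. -/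
def Ham {n : ℕ} (L : Evec n → Evec n → ℝ → ℝ) (x p : Evec n) (t : ℝ) : ℝ :=
  ⨆ v : Evec n, (⟪p, v⟫ - L x v t)



lemma periodic_bound {g : ℝ → ℝ} (hg : Continuous g) (hper : Function.Periodic g 1) :
    ∃ M : ℝ, ∀ s, |g s| ≤ M := by
  obtain ⟨M, hM⟩ := (isCompact_Icc : IsCompact (Set.Icc (0:ℝ) 1)).exists_bound_of_continuousOn
    hg.continuousOn
  refine ⟨M, fun s => ?_⟩
  have h1 : g (Int.fract s) = g s := by
    have h := hper.sub_int_mul_eq (x := s) (n := ⌊s⌋)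
    rw [mul_one] at h
    rw [Int.fract, h]
  rw [← h1]
  simpa [Real.norm_eq_abs] using hM (Int.fract s) ⟨Int.fract_nonneg s, (Int.fract_lt_one s).le⟩

lemma F_hasDeriv {f F : ℝ → ℝ} (hf : Continuous f)
    (hF : ∀ t, F t = ∫ τ in (0:ℝ)..t, f τ) : ∀ t, HasDerivAt F (f t) t := by
  intro t
  have h : HasDerivAt (fun u => ∫ τ in (0:ℝ)..u, f τ) (f t) t :=
    (hf.integral_hasStrictDerivAt 0 t).hasDerivAt
  have he : F = fun u => ∫ τ in (0:ℝ)..u, f τ := funext hF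
  rw [he]; exact h

lemma F_cont {f F : ℝ → ℝ} (hf : Continuous f)
    (hF : ∀ t, F t = ∫ τ in (0:ℝ)..t, f τ) : Continuous F :=
  continuous_iff_continuousAt.2 fun t => (F_hasDeriv hf hF t).continuousAt

/-- `F s ≤ m s + B` where `m` is the mean of `f`. -/
lemma F_upper {f F : ℝ → ℝ} (hf : Continuous f) (hfper : ∀ t, f (t + 1) = f t)
    (hF : ∀ t, F t = ∫ τ in (0:ℝ)..t, f τ) :
    ∃ B : ℝ, ∀ s, |F s - (∫ τ in (0:ℝ)..1, f τ) * s| ≤ B := by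
  set m : ℝ := ∫ τ in (0:ℝ)..1, f τ with hm
  have hper : Function.Periodic f 1 := hfper
  have hG : Function.Periodic (fun s => F s - m * s) 1 := by
    intro s
    have h1 : F (s + 1) = F s + ∫ τ in s..(s+1), f τ := by
      rw [hF, hF]
      rw [← intervalIntegral.integral_add_adjacent_intervals
        (hf.intervalIntegrable 0 s) (hf.intervalIntegrable s (s+1))]
    have h2 : (∫ τ in s..(s+1), f τ) = m := by
      have := hper.intervalIntegral_add_eq s 0
      simpa using this
    simp only [h1, h2]
    ring
  have hGc : Continuous fun s => F s - m * s := (F_cont hf hF).sub (continuous_const.mul continuous_id)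
  exact periodic_bound hGc hG

lemma integrableOn_exp_mul_Iic' {m : ℝ} (hm : 0 < m) (t : ℝ) :
    IntegrableOn (fun s => Real.exp (m * s)) (Set.Iic t) := by
  have key : ∀ a : ℝ, (∫ x in a..t, ‖Real.exp (m * x)‖) ≤ Real.exp (m * t) / m := by
    intro a
    have hd : ∀ x ∈ Set.uIcc a t, HasDerivAt (fun y => Real.exp (m * y) / m) (Real.exp (m * x)) x := by
      intro x _
      have : HasDerivAt (fun y => Real.exp (m * y)) (Real.exp (m * x) * m) x := by
        simpa [mul_comm] using ((hasDerivAt_id x).const_mul m).exp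
      simpa [mul_div_assoc, mul_div_cancel_right₀ _ (ne_of_gt hm)] using this.div_const m
    have hint : IntervalIntegrable (fun x => Real.exp (m * x)) volume a t :=
      (Real.continuous_exp.comp (continuous_const.mul continuous_id)).intervalIntegrable a t
    have := intervalIntegral.integral_eq_sub_of_hasDerivAt hd hint
    rcases le_total a t with h | h
    · rw [intervalIntegral.integral_of_le h] at this ⊢
      have : (∫ x in Set.Ioc a t, Real.exp (m * x)) = Real.exp (m*t)/m - Real.exp (m*a)/m := by
        simpa [intervalIntegral.integral_of_le h] using this
      calc (∫ x in Set.Ioc a t, ‖Real.exp (m * x)‖) = ∫ x in Set.Ioc a t, Real.exp (m * x) := by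
            simp [Real.norm_eq_abs, abs_of_pos (Real.exp_pos _)]
        _ = Real.exp (m*t)/m - Real.exp (m*a)/m := this
        _ ≤ Real.exp (m * t) / m := by
            have : 0 ≤ Real.exp (m*a)/m := le_of_lt (div_pos (Real.exp_pos _) hm)
            linarith
    · rw [intervalIntegral.integral_of_ge h]
      have h0 : (0:ℝ) ≤ Real.exp (m*t)/m := le_of_lt (div_pos (Real.exp_pos _) hm)
      have : (∫ x in Set.Ioc t a, ‖Real.exp (m * x)‖) ≥ 0 := by positivity
      linarith
  refine integrableOn_Iic_of_intervalIntegral_norm_bounded (Real.exp (m*t)/m) t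
    (fun a : ℝ => ?_) tendsto_id (Filter.Eventually.of_forall key)
  exact ((Real.continuous_exp.comp (continuous_const.mul continuous_id)).intervalIntegrable a t).1

/-- `e^{F s}` is integrable on any `Iic t`. -/
lemma integrableOn_expF_Iic {f F : ℝ → ℝ} (hf : Continuous f) (hfper : ∀ t, f (t + 1) = f t)
    (hfmean : 0 < ∫ t in (0:ℝ)..1, f t)
    (hF : ∀ t, F t = ∫ τ in (0:ℝ)..t, f τ) (t : ℝ) :
    IntegrableOn (fun s => Real.exp (F s)) (Set.Iic t) := by
  obtain ⟨B, hB⟩ := F_upper hf hfper hF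
  set m : ℝ := ∫ τ in (0:ℝ)..1, f τ
  have hbound : ∀ s, ‖Real.exp (F s)‖ ≤ Real.exp B * Real.exp (m * s) := by
    intro s
    rw [Real.norm_eq_abs, abs_of_pos (Real.exp_pos _), ← Real.exp_add]
    apply Real.exp_le_exp.2
    have := (abs_le.1 (hB s)).2
    linarith
  exact Integrable.mono' ((integrableOn_exp_mul_Iic' hfmean t).const_mul (Real.exp B))
    ((Real.continuous_exp.comp (F_cont hf hF)).aestronglyMeasurable.restrict)
    (ae_of_all _ hbound)




section Legendre
variable {n : ℕ} {L : Evec n → Evec n → ℝ → ℝ}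

/-- `v ↦ L x v t` is `C²`. -/
lemma L_slice_contDiff (hLsm : ContDiff ℝ 2 (fun q : Evec n × Evec n × ℝ => L q.1 q.2.1 q.2.2))
    (x : Evec n) (t : ℝ) : ContDiff ℝ 2 (fun v : Evec n => L x v t) := by
  have h : ContDiff ℝ 2 (fun v : Evec n => (x, v, t)) :=
    contDiff_const.prodMk (contDiff_id.prodMk contDiff_const)
  exact hLsm.comp h

/-- Strict convexity at midpoints from the positive-definite Hessian. -/
lemma L_midpoint_lt (hLsm : ContDiff ℝ 2 (fun q : Evec n × Evec n × ℝ => L q.1 q.2.1 q.2.2))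
    (hLconv : ∀ (x : Evec n) (t : ℝ) (v w : Evec n), w ≠ 0 →
      0 < iteratedFDeriv ℝ 2 (fun v' => L x v' t) v ![w, w])
    (x : Evec n) (t : ℝ) {v w : Evec n} (hvw : v ≠ w) :
    L x ((1/2 : ℝ) • v + (1/2 : ℝ) • w) t < (L x v t + L x w t) / 2 := by
  set g : Evec n → ℝ := fun u => L x u t with hg
  have hgc : ContDiff ℝ 2 g := L_slice_contDiff hLsm x t
  set d : Evec n := w - v with hd
  have hd0 : d ≠ 0 := sub_ne_zero.2 (Ne.symm hvw)
  set c : ℝ → Evec n := fun θ => v + θ • d with hc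
  have hcd : ∀ θ : ℝ, HasDerivAt c d θ := by
    intro θ
    simpa [hc] using ((hasDerivAt_id θ).smul_const d).const_add v
  set φ : ℝ → ℝ := fun θ => g (c θ) with hφ
  have hφ' : ∀ θ, HasDerivAt φ (fderiv ℝ g (c θ) d) θ := by
    intro θ
    exact ((hgc.differentiable (by norm_num)) (c θ)).hasFDerivAt.comp_hasDerivAt θ (hcd θ)
  have hderivφ : deriv φ = fun θ => fderiv ℝ g (c θ) d := funext fun θ => (hφ' θ).deriv
  have hψ' : ∀ θ, HasDerivAt (fun θ' => fderiv ℝ g (c θ') d)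
      (fderiv ℝ (fderiv ℝ g) (c θ) d d) θ := by
    intro θ
    have h1 : ContDiff ℝ 1 (fderiv ℝ g) := hgc.fderiv_right (by norm_num)
    have h2 : HasFDerivAt (fderiv ℝ g) (fderiv ℝ (fderiv ℝ g) (c θ)) (c θ) :=
      ((h1.differentiable (by norm_num)) (c θ)).hasFDerivAt
    have h3 : HasDerivAt (fun θ' => fderiv ℝ g (c θ')) (fderiv ℝ (fderiv ℝ g) (c θ) d) θ :=
      h2.comp_hasDerivAt θ (hcd θ)
    have h4 := (ContinuousLinearMap.apply ℝ ℝ d).hasFDerivAt.comp_hasDerivAt θ h3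
    exact h4
  have hconv : StrictConvexOn ℝ Set.univ φ := by
    apply strictConvexOn_univ_of_deriv2_pos
    · exact hgc.continuous.comp (continuous_const.add (continuous_id.smul continuous_const))
    · intro θ
      have : deriv (deriv φ) θ = fderiv ℝ (fderiv ℝ g) (c θ) d d := by
        rw [hderivφ]; exact (hψ' θ).deriv
      have h5 : iteratedFDeriv ℝ 2 g (c θ) ![d, d] = fderiv ℝ (fderiv ℝ g) (c θ) d d := by
        rw [iteratedFDeriv_two_apply]; simp
      have := hLconv x t (c θ) d hd0
      rw [h5] at this
      simpa [Function.iterate_succ, Function.comp] using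
        (by rw [show deriv^[2] φ = deriv (deriv φ) from rfl]; rw [‹deriv (deriv φ) θ = _›]; exact this :
          0 < deriv^[2] φ θ)
  have h01 : φ ((1/2 : ℝ) * 0 + (1/2 : ℝ) * 1) < (1/2 : ℝ) * φ 0 + (1/2 : ℝ) * φ 1 := by
    have := hconv.2 (Set.mem_univ (0:ℝ)) (Set.mem_univ (1:ℝ)) (by norm_num)
      (by norm_num : (0:ℝ) < 1/2) (by norm_num : (0:ℝ) < 1/2) (by norm_num)
    simpa [smul_eq_mul] using this
  have e0 : φ 0 = L x v t := by simp [hφ, hc, hg]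
  have e1 : φ 1 = L x w t := by simp [hφ, hc, hg, hd]
  have em : φ ((1/2 : ℝ) * 0 + (1/2 : ℝ) * 1) = L x ((1/2 : ℝ) • v + (1/2 : ℝ) • w) t := by
    have : v + ((1/2 : ℝ) * 0 + (1/2 : ℝ) * 1) • (w - v) = (1/2 : ℝ) • v + (1/2 : ℝ) • w := by
      rw [show (1/2 : ℝ) * 0 + (1/2 : ℝ) * 1 = (1/2 : ℝ) by norm_num]
      module
    simp only [hφ, hc, hg, hd, this]
  rw [em, e0, e1] at h01
  linarith
end Legendre

section Legendre2
variable {n : ℕ} {L : Evec n → Evec n → ℝ → ℝ}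

lemma exists_max (hLsm : ContDiff ℝ 2 (fun q : Evec n × Evec n × ℝ => L q.1 q.2.1 q.2.2))
    (hLsuper : ∀ k : ℝ, 0 ≤ k → ∃ C : ℝ, ∀ x v t, k * ‖v‖ - C ≤ L x v t)
    (x p : Evec n) (t : ℝ) :
    ∃ v : Evec n, ∀ u : Evec n, ⟪p, u⟫ - L x u t ≤ ⟪p, v⟫ - L x v t := by
  obtain ⟨C, hC⟩ := hLsuper (‖p‖ + 1) (by positivity)
  set g : Evec n → ℝ := fun u => ⟪p, u⟫ - L x u t with hgdef
  have hgc : Continuous g :=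
    (continuous_const.inner continuous_id).sub (L_slice_contDiff hLsm x t).continuous
  have hbd : ∀ u : Evec n, g u ≤ C - ‖u‖ := by
    intro u
    have h1 : ⟪p, u⟫ ≤ ‖p‖ * ‖u‖ := real_inner_le_norm p u
    have h2 := hC x u t
    simp only [hgdef]
    nlinarith [norm_nonneg u]
  set R : ℝ := C - g 0 + 1 with hRdef
  have hR0 : (0:ℝ) ≤ R := by have := hbd 0; simp at this; simp [hRdef]; linarith
  obtain ⟨v, hvball, hv⟩ := (isCompact_closedBall (0 : Evec n) R).exists_isMaxOn
    ⟨0, Metric.mem_closedBall_self hR0⟩ hgc.continuousOn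
  refine ⟨v, fun u => ?_⟩
  by_cases hu : u ∈ Metric.closedBall (0 : Evec n) R
  · exact hv hu
  · have h0 : g 0 ≤ g v := hv (Metric.mem_closedBall_self hR0)
    have hnu : R ≤ ‖u‖ := by
      have := Metric.mem_closedBall.not.1 hu
      rw [dist_zero_right] at this
      linarith [lt_of_not_ge this]
    have := hbd u
    show g u ≤ g v
    linarith

lemma max_unique (hLsm : ContDiff ℝ 2 (fun q : Evec n × Evec n × ℝ => L q.1 q.2.1 q.2.2))
    (hLconv : ∀ (x : Evec n) (t : ℝ) (v w : Evec n), w ≠ 0 →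
      0 < iteratedFDeriv ℝ 2 (fun v' => L x v' t) v ![w, w])
    (x p : Evec n) (t : ℝ) {v w : Evec n}
    (hv : ∀ u : Evec n, ⟪p, u⟫ - L x u t ≤ ⟪p, v⟫ - L x v t)
    (hw : ∀ u : Evec n, ⟪p, u⟫ - L x u t ≤ ⟪p, w⟫ - L x w t) : v = w := by
  by_contra hvw
  have heq : ⟪p, v⟫ - L x v t = ⟪p, w⟫ - L x w t := le_antisymm (hw v) (hv w)
  have hmid := L_midpoint_lt hLsm hLconv x t hvw
  have hin : ⟪p, (1/2:ℝ) • v + (1/2:ℝ) • w⟫ = (1/2) * ⟪p, v⟫ + (1/2) * ⟪p, w⟫ := by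
    simp [inner_add_right, inner_smul_right]
  have hle := hv ((1/2:ℝ) • v + (1/2:ℝ) • w)
  rw [hin] at hle
  linarith

lemma Ham_eq_max {x p : Evec n} {t : ℝ} {v : Evec n}
    (hv : ∀ u : Evec n, ⟪p, u⟫ - L x u t ≤ ⟪p, v⟫ - L x v t) :
    Ham L x p t = ⟪p, v⟫ - L x v t := by
  apply le_antisymm
  · exact ciSup_le hv
  · exact le_ciSup ⟨⟪p, v⟫ - L x v t, by rintro y ⟨u, rfl⟩; exact hv u⟩ v

lemma fenchel {x p : Evec n} {t : ℝ} {v : Evec n}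
    (hv : ∀ u : Evec n, ⟪p, u⟫ - L x u t ≤ ⟪p, v⟫ - L x v t) (u : Evec n) :
    ⟪p, u⟫ - L x u t ≤ Ham L x p t := by
  rw [Ham_eq_max hv]; exact hv u

set_option maxHeartbeats 2000000 in
lemma V_continuous (hLsm : ContDiff ℝ 2 (fun q : Evec n × Evec n × ℝ => L q.1 q.2.1 q.2.2))
    (hLconv : ∀ (x : Evec n) (t : ℝ) (v w : Evec n), w ≠ 0 →
      0 < iteratedFDeriv ℝ 2 (fun v' => L x v' t) v ![w, w])
    (hLsuper : ∀ k : ℝ, 0 ≤ k → ∃ C : ℝ, ∀ x v t, k * ‖v‖ - C ≤ L x v t)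
    (V : Evec n × Evec n × ℝ → Evec n)
    (hV : ∀ q : Evec n × Evec n × ℝ, ∀ u : Evec n,
      ⟪q.2.1, u⟫ - L q.1 u q.2.2 ≤ ⟪q.2.1, V q⟫ - L q.1 (V q) q.2.2) :
    Continuous V := by
  have hLc : Continuous (fun q : Evec n × Evec n × ℝ => L q.1 q.2.1 q.2.2) := hLsm.continuous
  rw [continuous_iff_continuousAt]
  intro q
  unfold ContinuousAt
  apply tendsto_of_subseq_tendsto
  intro ns hns
  obtain ⟨C, hC⟩ := hLsuper (‖q.2.1‖ + 2) (by positivity)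
  -- eventual bounds
  have hL0 : Tendsto (fun k => L (ns k).1 0 (ns k).2.2) atTop (𝓝 (L q.1 0 q.2.2)) := by
    have : Continuous (fun q' : Evec n × Evec n × ℝ => L q'.1 0 q'.2.2) := by
      have hemb : Continuous (fun q' : Evec n × Evec n × ℝ => ((q'.1, (0:Evec n), q'.2.2) : Evec n × Evec n × ℝ)) :=
        continuous_fst.prodMk (continuous_const.prodMk continuous_snd.snd)
      exact hLc.comp hemb
    exact (this.tendsto q).comp hns
  have hptend : Tendsto (fun k => ‖(ns k).2.1‖) atTop (𝓝 ‖q.2.1‖) :=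
    (continuous_norm.tendsto _).comp ((continuous_snd.fst.tendsto q).comp hns)
  have hev : ∀ᶠ k in atTop, ‖V (ns k)‖ ≤ C + |L q.1 0 q.2.2| + 1 := by
    have h1 : ∀ᶠ k in atTop, L (ns k).1 0 (ns k).2.2 ≤ |L q.1 0 q.2.2| + 1 := by
      have := hL0.eventually_le_const (by linarith [le_abs_self (L q.1 0 q.2.2)] :
        L q.1 0 q.2.2 < |L q.1 0 q.2.2| + 1)
      exact this
    have h2 : ∀ᶠ k in atTop, ‖(ns k).2.1‖ ≤ ‖q.2.1‖ + 1 :=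
      hptend.eventually_le_const (by linarith)
    filter_upwards [h1, h2] with k hk1 hk2
    have hmax := hV (ns k) 0
    simp only [inner_zero_right] at hmax
    have hip : ⟪(ns k).2.1, V (ns k)⟫ ≤ (‖q.2.1‖ + 1) * ‖V (ns k)‖ := by
      calc ⟪(ns k).2.1, V (ns k)⟫ ≤ ‖(ns k).2.1‖ * ‖V (ns k)‖ := real_inner_le_norm _ _
        _ ≤ (‖q.2.1‖ + 1) * ‖V (ns k)‖ := by
            apply mul_le_mul_of_nonneg_right hk2 (norm_nonneg _)
    have hsl := hC (ns k).1 (V (ns k)) (ns k).2.2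
    nlinarith [norm_nonneg (V (ns k))]
  obtain ⟨N, hN⟩ := eventually_atTop.1 hev
  set R : ℝ := C + |L q.1 0 q.2.2| + 1 with hRdef
  have hball : ∀ k, V (ns (k + N)) ∈ Metric.closedBall (0 : Evec n) R := by
    intro k
    rw [Metric.mem_closedBall, dist_zero_right]
    exact hN (k + N) (Nat.le_add_left N k)
  obtain ⟨w, -, ms, hms, hwlim⟩ := (isCompact_closedBall (0 : Evec n) R).tendsto_subseq hball
  have hns' : Tendsto (fun i => ns (ms i + N)) atTop (𝓝 q) :=
    hns.comp ((tendsto_add_atTop_nat N).comp hms.tendsto_atTop)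
  -- w is a maximizer at q
  set cseq : ℕ → Evec n × Evec n × ℝ := fun i => ns (ms i + N) with hcseq
  have hns'' : Tendsto cseq atTop (𝓝 q) := hns'
  have hc1 : Tendsto (fun i => (cseq i).1) atTop (𝓝 q.1) := (continuous_fst.tendsto q).comp hns''
  have hc2 : Tendsto (fun i => (cseq i).2.1) atTop (𝓝 q.2.1) :=
    (continuous_snd.fst.tendsto q).comp hns''
  have hc3 : Tendsto (fun i => (cseq i).2.2) atTop (𝓝 q.2.2) :=
    (continuous_snd.snd.tendsto q).comp hns''
  have hvs : Tendsto (fun i => V (cseq i)) atTop (𝓝 w) := hwlim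
  have hwmax : ∀ u : Evec n, ⟪q.2.1, u⟫ - L q.1 u q.2.2 ≤ ⟪q.2.1, w⟫ - L q.1 w q.2.2 := by
    intro u
    have hinner : Tendsto (fun i => (⟪(cseq i).2.1, V (cseq i)⟫ : ℝ)) atTop (𝓝 ⟪q.2.1, w⟫) :=
      hc2.inner hvs
    have hLv : Tendsto (fun i => L (cseq i).1 (V (cseq i)) (cseq i).2.2) atTop
        (𝓝 (L q.1 w q.2.2)) :=
      (hLc.tendsto (q.1, w, q.2.2)).comp (hc1.prodMk_nhds (hvs.prodMk_nhds hc3))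
    have hinner2 : Tendsto (fun i => (⟪(cseq i).2.1, u⟫ : ℝ)) atTop (𝓝 ⟪q.2.1, u⟫) :=
      hc2.inner tendsto_const_nhds
    have hLu : Tendsto (fun i => L (cseq i).1 u (cseq i).2.2) atTop (𝓝 (L q.1 u q.2.2)) :=
      (hLc.tendsto (q.1, u, q.2.2)).comp (hc1.prodMk_nhds (tendsto_const_nhds.prodMk_nhds hc3))
    exact le_of_tendsto_of_tendsto (hinner2.sub hLu) (hinner.sub hLv)
      (Eventually.of_forall fun i => hV (cseq i) u)
  have hweq : w = V q := max_unique hLsm hLconv q.1 q.2.1 q.2.2 hwmax (hV q)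
  exact ⟨fun i => ms i + N, hweq ▸ hwlim⟩

lemma hasGradientAt_Ham (hLsm : ContDiff ℝ 2 (fun q : Evec n × Evec n × ℝ => L q.1 q.2.1 q.2.2))
    (hLconv : ∀ (x : Evec n) (t : ℝ) (v w : Evec n), w ≠ 0 →
      0 < iteratedFDeriv ℝ 2 (fun v' => L x v' t) v ![w, w])
    (hLsuper : ∀ k : ℝ, 0 ≤ k → ∃ C : ℝ, ∀ x v t, k * ‖v‖ - C ≤ L x v t)
    (V : Evec n × Evec n × ℝ → Evec n)
    (hV : ∀ q : Evec n × Evec n × ℝ, ∀ u : Evec n,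
      ⟪q.2.1, u⟫ - L q.1 u q.2.2 ≤ ⟪q.2.1, V q⟫ - L q.1 (V q) q.2.2)
    (x p : Evec n) (t : ℝ) :
    HasGradientAt (fun p' => Ham L x p' t) (V (x, p, t)) p := by
  rw [hasGradientAt_iff_isLittleO, Asymptotics.isLittleO_iff]
  intro c hc
  have hVc : Continuous V := V_continuous hLsm hLconv hLsuper V hV
  have h1 : Tendsto (fun p' : Evec n => V (x, p', t)) (𝓝 p) (𝓝 (V (x, p, t))) :=
    (hVc.tendsto _).comp (Continuous.tendsto
      (continuous_const.prodMk (continuous_id.prodMk continuous_const)) p)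
  have h2 : ∀ᶠ p' in 𝓝 p, ‖V (x, p', t) - V (x, p, t)‖ ≤ c := by
    have := Metric.tendsto_nhds.1 h1 c hc
    filter_upwards [this] with p' hp'
    rw [dist_eq_norm] at hp'
    exact hp'.le
  filter_upwards [h2] with p' hp'
  set v₀ := V (x, p, t)
  set v' := V (x, p', t)
  have hHp : Ham L x p t = ⟪p, v₀⟫ - L x v₀ t := Ham_eq_max (hV (x, p, t))
  have hHp' : Ham L x p' t = ⟪p', v'⟫ - L x v' t := Ham_eq_max (hV (x, p', t))
  have hlow : ⟪p' - p, v₀⟫ ≤ Ham L x p' t - Ham L x p t := by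
    have := fenchel (hV (x, p', t)) v₀
    rw [hHp, inner_sub_left]
    linarith
  have hup : Ham L x p' t - Ham L x p t ≤ ⟪p' - p, v'⟫ := by
    have := fenchel (hV (x, p, t)) v'
    rw [hHp', inner_sub_left]
    linarith
  have key : |Ham L x p' t - Ham L x p t - ⟪v₀, p' - p⟫| ≤ c * ‖p' - p‖ := by
    have hcomm : ⟪v₀, p' - p⟫ = ⟪p' - p, v₀⟫ := real_inner_comm _ _
    rw [abs_le]
    constructor
    · have hnn : 0 ≤ c * ‖p' - p‖ := mul_nonneg hc.le (norm_nonneg _)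
      rw [hcomm]
      linarith
    · have h3 : Ham L x p' t - Ham L x p t - ⟪v₀, p' - p⟫ ≤ ⟪p' - p, v' - v₀⟫ := by
        rw [hcomm, inner_sub_right]
        linarith
      calc Ham L x p' t - Ham L x p t - ⟪v₀, p' - p⟫ ≤ ⟪p' - p, v' - v₀⟫ := h3
        _ ≤ ‖p' - p‖ * ‖v' - v₀‖ := real_inner_le_norm _ _
        _ ≤ ‖p' - p‖ * c := mul_le_mul_of_nonneg_left hp' (norm_nonneg _)
        _ = c * ‖p' - p‖ := mul_comm _ _
  simpa [Real.norm_eq_abs] using key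
end Legendre2

section WK
variable {n : ℕ} {f F : ℝ → ℝ} {L : Evec n → Evec n → ℝ → ℝ} {α : ℝ}

lemma wkSet_nonempty (hf : Continuous f) (hfper : ∀ t, f (t + 1) = f t)
    (hfmean : 0 < ∫ t in (0:ℝ)..1, f t) (hF : ∀ t, F t = ∫ τ in (0:ℝ)..t, f τ)
    (hLsm : ContDiff ℝ 2 (fun q : Evec n × Evec n × ℝ => L q.1 q.2.1 q.2.2))
    (hLtper : ∀ (x v : Evec n) (t : ℝ), L x v (t + 1) = L x v t)
    (x : Evec n) (t : ℝ) : (wkSet F L α x t).Nonempty := by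
  have hcont : Continuous (fun s : ℝ => L x 0 s) := by
    exact hLsm.continuous.comp
      (continuous_const.prodMk (continuous_const.prodMk continuous_id))
  obtain ⟨M, hM⟩ := periodic_bound hcont (fun s => hLtper x 0 s)
  have hintexp := integrableOn_expF_Iic hf hfper hfmean hF t
  have hint : IntegrableOn (fun s => Real.exp (F s - F t) * (L x 0 s + α)) (Set.Iic t) := by
    apply Integrable.mono' (hintexp.const_mul (Real.exp (-F t) * (M + |α|)))
    · exact (((Real.continuous_exp.comp ((F_cont hf hF).sub continuous_const)).mul
        (hcont.add continuous_const)).aestronglyMeasurable).restrict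
    · refine ae_of_all _ fun s => ?_
      have h1 : |L x 0 s + α| ≤ M + |α| := (abs_add_le _ _).trans (add_le_add (hM s) le_rfl)
      have h2 : Real.exp (F s - F t) = Real.exp (-F t) * Real.exp (F s) := by
        rw [← Real.exp_add]; ring_nf
      rw [Real.norm_eq_abs, abs_mul, abs_of_pos (Real.exp_pos _), h2]
      have h3 : (0:ℝ) ≤ Real.exp (-F t) * Real.exp (F s) := by positivity
      calc Real.exp (-F t) * Real.exp (F s) * |L x 0 s + α|
          ≤ Real.exp (-F t) * Real.exp (F s) * (M + |α|) := by
            exact mul_le_mul_of_nonneg_left h1 h3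
        _ = Real.exp (-F t) * (M + |α|) * Real.exp (F s) := by ring
  exact ⟨_, fun _ => x, fun _ => 0, fun a _ b _ => ⟨intervalIntegrable_const, by simp⟩,
    rfl, hint, rfl⟩

lemma wkSet_bddBelow (hf : Continuous f) (hfper : ∀ t, f (t + 1) = f t)
    (hfmean : 0 < ∫ t in (0:ℝ)..1, f t) (hF : ∀ t, F t = ∫ τ in (0:ℝ)..t, f τ)
    (hLsuper : ∀ k : ℝ, 0 ≤ k → ∃ C : ℝ, ∀ x v t, k * ‖v‖ - C ≤ L x v t)
    (x : Evec n) (t : ℝ) : BddBelow (wkSet F L α x t) := by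
  obtain ⟨C, hC⟩ := hLsuper 0 le_rfl
  have hintexp := integrableOn_expF_Iic hf hfper hfmean hF t
  have hlow : IntegrableOn (fun s => Real.exp (F s - F t) * (α - C)) (Set.Iic t) := by
    have heq : (fun s => Real.exp (F s - F t) * (α - C))
        = fun s => (Real.exp (-F t) * (α - C)) * Real.exp (F s) := by
      funext s
      rw [Real.exp_sub, Real.exp_neg]
      ring
    rw [heq]
    exact hintexp.const_mul _
  refine ⟨∫ s in Set.Iic t, Real.exp (F s - F t) * (α - C), ?_⟩
  rintro r ⟨γ, γ', hAC, hγt, hint, rfl⟩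
  apply setIntegral_mono_on hlow hint measurableSet_Iic
  intro s hs
  have h1 := hC (γ s) (γ' s) s
  rw [zero_mul, zero_sub] at h1
  have h0 : (0:ℝ) ≤ Real.exp (F s - F t) := (Real.exp_pos _).le
  have : α - C ≤ L (γ s) (γ' s) s + α := by linarith
  exact mul_le_mul_of_nonneg_left this h0
end WK

section Chain
variable {n : ℕ} {f F : ℝ → ℝ} {L : Evec n → Evec n → ℝ → ℝ} {α : ℝ}

lemma ACOn_of_le {γ γ' : ℝ → Evec n} {S : Set ℝ}
    (h : ∀ a ∈ S, ∀ b ∈ S, a ≤ b →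
      IntervalIntegrable γ' MeasureTheory.volume a b ∧ γ b = γ a + ∫ τ in a..b, γ' τ) :
    ACOn γ γ' S := by
  intro a ha b hb
  rcases le_total a b with hab | hab
  · exact h a ha b hb hab
  · obtain ⟨hi, he⟩ := h b hb a ha hab
    refine ⟨hi.symm, ?_⟩
    rw [intervalIntegral.integral_symm, he]
    abel

lemma chain_ineq
    (hf : Continuous f) (hfper : ∀ t, f (t + 1) = f t)
    (hfmean : 0 < ∫ t in (0:ℝ)..1, f t) (hF : ∀ t, F t = ∫ τ in (0:ℝ)..t, f τ)
    (hLsm : ContDiff ℝ 2 (fun q : Evec n × Evec n × ℝ => L q.1 q.2.1 q.2.2))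
    (hLtper : ∀ (x v : Evec n) (t : ℝ), L x v (t + 1) = L x v t)
    (hLsuper : ∀ k : ℝ, 0 ≤ k → ∃ C : ℝ, ∀ x v t, k * ‖v‖ - C ≤ L x v t)
    {I : Set ℝ} (hI : I.OrdConnected)
    {X W : ℝ → Evec n}
    (hWc : ContinuousOn W I)
    (hXd : ∀ s ∈ I, HasDerivWithinAt X (W s) I s)
    {a b : ℝ} (ha : a ∈ I) (hb : b ∈ I) (hab : a ≤ b) :
    Real.exp (F b) * uWK F L α (X b) b ≤ Real.exp (F a) * uWK F L α (X a) a
      + ∫ s in a..b, Real.exp (F s) * (L (X s) (W s) s + α) := by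
  have hIcc : Set.Icc a b ⊆ I := hI.out ha hb
  have hXc : ContinuousOn X I := fun s hs => (hXd s hs).continuousWithinAt
  have hFc : Continuous F := F_cont hf hF
  have hLc : Continuous (fun q : Evec n × Evec n × ℝ => L q.1 q.2.1 q.2.2) := hLsm.continuous
  -- continuity of the composite integrand on I
  have hLXWc : ContinuousOn (fun s => L (X s) (W s) s) I :=
    hLc.comp_continuousOn (hXc.prodMk (hWc.prodMk continuousOn_id))
  -- FTC for X along W on subintervals of [a,b]
  have hXftc : ∀ c d : ℝ, a ≤ c → c ≤ d → d ≤ b →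
      (∫ s in c..d, W s) = X d - X c := by
    intro c d hac hcd hdb
    have hsubI : Set.Icc c d ⊆ I := fun s hs => hIcc ⟨hac.trans hs.1, hs.2.trans hdb⟩
    apply intervalIntegral.integral_eq_sub_of_hasDeriv_right_of_le hcd
      (hXc.mono hsubI) ?_ ?_
    · intro s hs
      have hsI : Set.Icc c d ∈ 𝓝 s := Icc_mem_nhds hs.1 hs.2
      have hIn : I ∈ 𝓝 s := Filter.mem_of_superset hsI hsubI
      exact ((hXd s (hsubI (Set.Ioo_subset_Icc_self hs))).hasDerivAt hIn).hasDerivWithinAt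
    · have : ContinuousOn W (Set.uIcc c d) := by
        rw [Set.uIcc_of_le hcd]; exact hWc.mono hsubI
      exact this.intervalIntegrable
  have hWiiW : ∀ c d : ℝ, a ≤ c → c ≤ d → d ≤ b → IntervalIntegrable W volume c d := by
    intro c d hac hcd hdb
    have : ContinuousOn W (Set.uIcc c d) := by
      rw [Set.uIcc_of_le hcd]
      exact hWc.mono fun s hs => hIcc ⟨hac.trans hs.1, hs.2.trans hdb⟩
    exact this.intervalIntegrable
  set G : ℝ → ℝ := fun s => Real.exp (F s) * (L (X s) (W s) s + α) with hGdef
  have hGc : ContinuousOn G I :=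
    ((Real.continuous_exp.comp hFc).continuousOn).mul (hLXWc.add continuousOn_const)
  have hGii : IntervalIntegrable G volume a b := by
    have : ContinuousOn G (Set.uIcc a b) := by
      rw [Set.uIcc_of_le hab]; exact hGc.mono hIcc
    exact this.intervalIntegrable
  -- the main estimate for each competitor r
  have key : ∀ r ∈ wkSet F L α (X a) a,
      Real.exp (F b) * uWK F L α (X b) b ≤ Real.exp (F a) * r + ∫ s in a..b, G s := by
    rintro r ⟨γ, γ', hAC, hγa, hint, rfl⟩
    classical
    set δ : ℝ → Evec n := fun s => if s ≤ a then γ s else X s with hδdef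
    set δ' : ℝ → Evec n := fun s => if s ≤ a then γ' s else W s with hδ'def
    have hδγ : ∀ s, s ≤ a → δ s = γ s := fun s hs => if_pos hs
    have hδ'γ' : ∀ s, s ≤ a → δ' s = γ' s := fun s hs => if_pos hs
    have hδX : ∀ s, a ≤ s → δ s = X s := by
      intro s hs
      by_cases h : s ≤ a
      · have h2 : s = a := le_antisymm h hs
        rw [h2]
        simp [hδdef, hγa]
      · simp only [hδdef, if_neg h]
    have hδ'W : ∀ s, a < s → δ' s = W s := fun s hs => if_neg (not_le.2 hs)
    -- integrability of δ' on pieces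
    have hii1 : ∀ c d : ℝ, c ≤ d → d ≤ a → IntervalIntegrable δ' volume c d := by
      intro c d hcd hda
      rw [intervalIntegrable_iff_integrableOn_Ioc_of_le hcd]
      have h0 : IntervalIntegrable γ' volume c d :=
        (hAC c ((hcd.trans hda) : c ≤ a) d hda).1
      rw [intervalIntegrable_iff_integrableOn_Ioc_of_le hcd] at h0
      exact h0.congr_fun (fun s hs => (hδ'γ' s (hs.2.trans hda)).symm) measurableSet_Ioc
    have hii2 : ∀ c d : ℝ, a ≤ c → c ≤ d → d ≤ b → IntervalIntegrable δ' volume c d := by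
      intro c d hac hcd hdb
      rw [intervalIntegrable_iff_integrableOn_Ioc_of_le hcd]
      have h0 := hWiiW c d hac hcd hdb
      rw [intervalIntegrable_iff_integrableOn_Ioc_of_le hcd] at h0
      exact h0.congr_fun (fun s hs => (hδ'W s (hac.trans_lt hs.1)).symm) measurableSet_Ioc
    -- integral identities on pieces
    have heq1 : ∀ c d : ℝ, c ≤ d → d ≤ a → δ d = δ c + ∫ τ in c..d, δ' τ := by
      intro c d hcd hda
      have h0 := (hAC c ((hcd.trans hda) : c ≤ a) d hda).2
      have h1 : (∫ τ in c..d, δ' τ) = ∫ τ in c..d, γ' τ := by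
        apply intervalIntegral.integral_congr
        intro s hs
        rw [Set.uIcc_of_le hcd] at hs
        exact hδ'γ' s (hs.2.trans hda)
      rw [hδγ d hda, hδγ c (hcd.trans hda), h1, h0]
    have heq2 : ∀ c d : ℝ, a ≤ c → c ≤ d → d ≤ b → δ d = δ c + ∫ τ in c..d, δ' τ := by
      intro c d hac hcd hdb
      have h1 : (∫ τ in c..d, δ' τ) = ∫ τ in c..d, W τ := by
        rw [intervalIntegral.integral_of_le hcd, intervalIntegral.integral_of_le hcd]
        apply setIntegral_congr_fun measurableSet_Ioc
        intro s hs
        exact hδ'W s (hac.trans_lt hs.1)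
      rw [hδX d (hac.trans hcd), hδX c hac, h1, hXftc c d hac hcd hdb]
      abel
    -- ACOn for the glued curve
    have hACδ : ACOn δ δ' (Set.Iic b) := by
      apply ACOn_of_le
      intro c hc d hd hcd
      rcases le_total d a with hda | had
      · exact ⟨hii1 c d hcd hda, heq1 c d hcd hda⟩
      · rcases le_total a c with hac | hca
        · exact ⟨hii2 c d hac hcd hd, heq2 c d hac hcd hd⟩
        · have hiicd : IntervalIntegrable δ' volume c d :=
            (hii1 c a hca le_rfl).trans (hii2 a d le_rfl had hd)
          refine ⟨hiicd, ?_⟩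
          rw [← intervalIntegral.integral_add_adjacent_intervals
            (hii1 c a hca le_rfl) (hii2 a d le_rfl had hd)]
          rw [heq2 a d le_rfl had hd, heq1 c a hca le_rfl]
          abel
    -- integrability of the action integrand for δ on Iic b
    set g0 : ℝ → ℝ := fun s => Real.exp (F s - F a) * (L (γ s) (γ' s) s + α) with hg0def
    set g1 : ℝ → ℝ := fun s => Real.exp (F s - F b) * (L (δ s) (δ' s) s + α) with hg1def
    have hg1a : ∀ s, s ≤ a → g1 s = Real.exp (F a - F b) * g0 s := by
      intro s hs
      simp only [hg1def, hg0def, hδγ s hs, hδ'γ' s hs]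
      rw [← mul_assoc, ← Real.exp_add]
      ring_nf
    have hint1 : IntegrableOn g1 (Set.Iic a) := by
      have h0 : IntegrableOn (fun s => Real.exp (F a - F b) * g0 s) (Set.Iic a) :=
        hint.const_mul _
      exact h0.congr_fun (fun s hs => (hg1a s hs).symm) measurableSet_Iic
    have hint2 : IntegrableOn g1 (Set.Ioc a b) := by
      have hcont : ContinuousOn (fun s => Real.exp (F s - F b) * (L (X s) (W s) s + α))
          (Set.Icc a b) :=
        ((Real.continuous_exp.comp (hFc.sub continuous_const)).continuousOn).mul
          ((hLXWc.mono hIcc).add continuousOn_const)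
      have := (hcont.integrableOn_Icc (μ := volume)).mono_set Set.Ioc_subset_Icc_self
      apply this.congr_fun ?_ measurableSet_Ioc
      intro s hs
      simp only [hg1def, hδX s hs.1.le, hδ'W s hs.1]
    have hintg1 : IntegrableOn g1 (Set.Iic b) := by
      rw [← Set.Iic_union_Ioc_eq_Iic hab]
      exact hint1.union hint2
    -- the value of the action of δ
    have hval : (∫ s in Set.Iic b, g1 s)
        = Real.exp (F a - F b) * (∫ s in Set.Iic a, g0 s)
          + (∫ s in a..b, G s) / Real.exp (F b) := by
      rw [← Set.Iic_union_Ioc_eq_Iic hab,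
        setIntegral_union (Set.Iic_disjoint_Ioc le_rfl) measurableSet_Ioc hint1 hint2]
      congr 1
      · rw [← MeasureTheory.integral_const_mul]
        exact setIntegral_congr_fun measurableSet_Iic fun s hs => hg1a s hs
      · rw [intervalIntegral.integral_of_le hab, ← MeasureTheory.integral_div]
        apply setIntegral_congr_fun measurableSet_Ioc
        intro s hs
        simp only [hg1def, hGdef, hδX s hs.1.le, hδ'W s hs.1]
        rw [Real.exp_sub]
        ring
    -- membership in wkSet at (X b, b)
    have hmem : Real.exp (F a - F b) * (∫ s in Set.Iic a, g0 s)
        + (∫ s in a..b, G s) / Real.exp (F b) ∈ wkSet F L α (X b) b := by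
      refine ⟨δ, δ', hACδ, hδX b hab, hintg1, hval.symm⟩
    have hle : uWK F L α (X b) b ≤ Real.exp (F a - F b) * (∫ s in Set.Iic a, g0 s)
        + (∫ s in a..b, G s) / Real.exp (F b) :=
      csInf_le (wkSet_bddBelow hf hfper hfmean hF hLsuper (X b) b) hmem
    have hexpb : (0:ℝ) < Real.exp (F b) := Real.exp_pos _
    calc Real.exp (F b) * uWK F L α (X b) b
        ≤ Real.exp (F b) * (Real.exp (F a - F b) * (∫ s in Set.Iic a, g0 s)
          + (∫ s in a..b, G s) / Real.exp (F b)) := by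
          exact mul_le_mul_of_nonneg_left hle hexpb.le
      _ = Real.exp (F a) * (∫ s in Set.Iic a, g0 s) + ∫ s in a..b, G s := by
          rw [mul_add, Real.exp_sub]
          have h1 : Real.exp (F b) * (Real.exp (F a) / Real.exp (F b)
              * (∫ s in Set.Iic a, g0 s)) = Real.exp (F a) * ∫ s in Set.Iic a, g0 s := by
            field_simp
          have h2 : Real.exp (F b) * ((∫ s in a..b, G s) / Real.exp (F b))
              = ∫ s in a..b, G s := by
            field_simp
          rw [h1, h2]
  -- take the infimum over r
  have hne := wkSet_nonempty (α := α) hf hfper hfmean hF hLsm hLtper (X a) a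
  have hfin : (Real.exp (F b) * uWK F L α (X b) b - ∫ s in a..b, G s) / Real.exp (F a)
      ≤ uWK F L α (X a) a := by
    apply le_csInf hne
    intro r hr
    rw [div_le_iff₀ (Real.exp_pos _)]
    have := key r hr
    linarith [key r hr]
  have hexpa : (0:ℝ) < Real.exp (F a) := Real.exp_pos _
  rw [div_le_iff₀ hexpa] at hfin
  linarith [hfin]
end Chain

/-- Monotonicity along the extended Hamiltonian flow: if
`(x,p,u)` solves the extended dissipative Hamiltonian system on an interval
`I`, then `t ↦ e^{F(t)}(u_α⁻(x(t),t) - u(t))` is non-increasing on `I`; in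
particular once `u ≥ u_α⁻(x,·)` holds it persists forward in time. -/
theorem extended_flow_monotonicity
    (n : ℕ) (hn : 1 ≤ n)
    (f F : ℝ → ℝ)
    (hf : Continuous f) (hfper : ∀ t, f (t + 1) = f t)
    (hfmean : 0 < ∫ t in (0:ℝ)..1, f t)
    (hF : ∀ t, F t = ∫ τ in (0:ℝ)..t, f τ)
    (L : Evec n → Evec n → ℝ → ℝ)
    (hLsm : ContDiff ℝ 2 (fun q : Evec n × Evec n × ℝ => L q.1 q.2.1 q.2.2))
    (hLxper : ∀ (k : Fin n → ℤ) (x v : Evec n) (t : ℝ), L (x + intVec k) v t = L x v t)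
    (hLtper : ∀ (x v : Evec n) (t : ℝ), L x v (t + 1) = L x v t)
    (hLconv : ∀ (x : Evec n) (t : ℝ) (v w : Evec n), w ≠ 0 →
      0 < iteratedFDeriv ℝ 2 (fun v' => L x v' t) v ![w, w])
    (hLsuper : ∀ k : ℝ, 0 ≤ k → ∃ C : ℝ, ∀ x v t, k * ‖v‖ - C ≤ L x v t)
    (α : ℝ) (I : Set ℝ) (hI : I.OrdConnected)
    (X P : ℝ → Evec n) (U : ℝ → ℝ)
    (hX : ∀ t ∈ I, HasDerivWithinAt X
      (gradient (fun p => Ham L (X t) p t) (P t)) I t)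
    (hP : ∀ t ∈ I, HasDerivWithinAt P
      (-(gradient (fun y => Ham L y (P t) t) (X t)) - f t • P t) I t)
    (hU : ∀ t ∈ I, HasDerivWithinAt U
      (⟪gradient (fun p => Ham L (X t) p t) (P t), P t⟫
        - Ham L (X t) (P t) t + α - f t * U t) I t) :
    AntitoneOn (fun t => Real.exp (F t) * (uWK F L α (X t) t - U t)) I ∧
    ∀ t₀ ∈ I, ∀ t ∈ I, t₀ ≤ t →
      uWK F L α (X t₀) t₀ ≤ U t₀ → uWK F L α (X t) t ≤ U t := by
  classical
  have hex : ∀ q : Evec n × Evec n × ℝ, ∃ v : Evec n, ∀ u : Evec n,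
      ⟪q.2.1, u⟫ - L q.1 u q.2.2 ≤ ⟪q.2.1, v⟫ - L q.1 v q.2.2 :=
    fun q => exists_max hLsm hLsuper q.1 q.2.1 q.2.2
  choose V hV using hex
  have hVc : Continuous V := V_continuous hLsm hLconv hLsuper V hV
  have hgrad : ∀ (x p : Evec n) (t : ℝ),
      gradient (fun p' => Ham L x p' t) p = V (x, p, t) :=
    fun x p t => (hasGradientAt_Ham hLsm hLconv hLsuper V hV x p t).gradient
  set W : ℝ → Evec n := fun s => V (X s, P s, s) with hWdef
  have hXd : ∀ s ∈ I, HasDerivWithinAt X (W s) I s := by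
    intro s hs
    have h := hX s hs
    rwa [hgrad] at h
  have hPc : ContinuousOn P I := fun s hs => (hP s hs).continuousWithinAt
  have hXc : ContinuousOn X I := fun s hs => (hXd s hs).continuousWithinAt
  have hWc : ContinuousOn W I :=
    hVc.comp_continuousOn (hXc.prodMk (hPc.prodMk continuousOn_id))
  have hLeg : ∀ s : ℝ, L (X s) (W s) s = ⟪W s, P s⟫ - Ham L (X s) (P s) s := by
    intro s
    have h1 : Ham L (X s) (P s) s = ⟪P s, W s⟫ - L (X s) (W s) s :=
      Ham_eq_max (hV (X s, P s, s))
    have h2 : (⟪W s, P s⟫ : ℝ) = ⟪P s, W s⟫ := real_inner_comm _ _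
    rw [h1, h2]
    ring
  have hEU : ∀ s ∈ I, HasDerivWithinAt (fun t => Real.exp (F t) * U t)
      (Real.exp (F s) * (L (X s) (W s) s + α)) I s := by
    intro s hs
    have hU' := hU s hs
    rw [hgrad] at hU'
    have hFd : HasDerivAt (fun t => Real.exp (F t)) (Real.exp (F s) * f s) s :=
      (F_hasDeriv hf hF s).exp
    have hprod := (hFd.hasDerivWithinAt).mul hU'
    refine HasDerivWithinAt.congr_deriv hprod ?_
    rw [hLeg s]
    ring
  have hmain : ∀ a ∈ I, ∀ b ∈ I, a ≤ b →
      Real.exp (F b) * (uWK F L α (X b) b - U b)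
        ≤ Real.exp (F a) * (uWK F L α (X a) a - U a) := by
    intro a ha b hb hab
    have hchain := chain_ineq (α := α) hf hfper hfmean hF hLsm hLtper hLsuper hI hWc hXd ha hb hab
    have hIcc : Set.Icc a b ⊆ I := hI.out ha hb
    have hEUc : ContinuousOn (fun t => Real.exp (F t) * U t) I :=
      fun s hs => (hEU s hs).continuousWithinAt
    have hGii : IntervalIntegrable (fun s => Real.exp (F s) * (L (X s) (W s) s + α)) volume a b := by
      have hcont : ContinuousOn (fun s => Real.exp (F s) * (L (X s) (W s) s + α)) (Set.uIcc a b) := by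
        rw [Set.uIcc_of_le hab]
        refine ContinuousOn.mono ?_ hIcc
        exact ((Real.continuous_exp.comp (F_cont hf hF)).continuousOn).mul
          ((hLsm.continuous.comp_continuousOn (hXc.prodMk (hWc.prodMk continuousOn_id))).add
            continuousOn_const)
      exact hcont.intervalIntegrable
    have hftc : (∫ s in a..b, Real.exp (F s) * (L (X s) (W s) s + α))
        = Real.exp (F b) * U b - Real.exp (F a) * U a := by
      apply intervalIntegral.integral_eq_sub_of_hasDeriv_right_of_le hab (hEUc.mono hIcc) ?_ hGii
      intro s hs
      have hn : I ∈ 𝓝 s := Filter.mem_of_superset (Icc_mem_nhds hs.1 hs.2) hIcc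
      exact ((hEU s (hIcc (Set.Ioo_subset_Icc_self hs))).hasDerivAt hn).hasDerivWithinAt
    rw [hftc] at hchain
    nlinarith [hchain]
  constructor
  · intro a ha b hb hab
    exact hmain a ha b hb hab
  · intro t₀ ht₀ t ht htt hU0
    have h := hmain t₀ ht₀ t ht htt
    have h0 : Real.exp (F t₀) * (uWK F L α (X t₀) t₀ - U t₀) ≤ 0 :=
      mul_nonpos_of_nonneg_of_nonpos (Real.exp_pos _).le (by linarith)
    have h1 : Real.exp (F t) * (uWK F L α (X t) t - U t) ≤ 0 := le_trans h h0
    nlinarith [Real.exp_pos (F t)]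
end
end
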